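/- Let S be a set-presentable class of finitely presented left R-modules containing R. An R-module E is S-pure injective if and only if E has no proper S-pure essential extension. -/

import Mathlib

open Function LinearMap

universe u

variable {R : Type u}

section Defs
variable [Ring R]

/-- The lifting property defining `S`-purity of an epimorphism `g`. -/
def SPureLift (S : Set (ModuleCat.{u} R)) {B C : Type u} [AddCommGroup B] [Module R B]
    [AddCommGroup C] [Module R C] (g : B →ₗ[R] C) : Prop :=
  ∀ U ∈ S, ∀ h : U →ₗ[R] C, ∃ h' : U →ₗ[R] B, g ∘ₗ h' = h

/-- `0 → A → B → C → 0` is an `S`-pure exact sequence. -/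
def IsSPureExact (S : Set (ModuleCat.{u} R)) {A B C : Type u} [AddCommGroup A] [Module R A]
    [AddCommGroup B] [Module R B] [AddCommGroup C] [Module R C]
    (f : A →ₗ[R] B) (g : B →ₗ[R] C) : Prop :=
  Function.Injective f ∧ Function.Surjective g ∧ Function.Exact f g ∧ SPureLift S g

/-- `E` is `S`-pure injective. -/
def IsSPureInjective (S : Set (ModuleCat.{u} R)) (E : Type u) [AddCommGroup E]
    [Module R E] : Prop :=
  ∀ ⦃A B C : Type u⦄ [AddCommGroup A] [Module R A] [AddCommGroup B] [Module R B]
    [AddCommGroup C] [Module R C] (f : A →ₗ[R] B) (g : B →ₗ[R] C),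
    IsSPureExact S f g → ∀ h : A →ₗ[R] E, ∃ h' : B →ₗ[R] E, h' ∘ₗ f = h

/-- `P` is `S`-pure projective. -/
def IsSPureProjective (S : Set (ModuleCat.{u} R)) (P : Type u) [AddCommGroup P]
    [Module R P] : Prop :=
  ∀ ⦃A B C : Type u⦄ [AddCommGroup A] [Module R A] [AddCommGroup B] [Module R B]
    [AddCommGroup C] [Module R C] (f : A →ₗ[R] B) (g : B →ₗ[R] C),
    IsSPureExact S f g → ∀ h : P →ₗ[R] C, ∃ h' : P →ₗ[R] B, g ∘ₗ h' = h

/-- `N` is an `S`-pure submodule of `M`. -/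
def IsSPureSubmodule (S : Set (ModuleCat.{u} R)) {M : Type u} [AddCommGroup M] [Module R M]
    (N : Submodule R M) : Prop :=
  SPureLift S N.mkQ

/-- `φ` is an `S`-pure monomorphism. -/
def IsSPureMono (S : Set (ModuleCat.{u} R)) {M E : Type u} [AddCommGroup M] [Module R M]
    [AddCommGroup E] [Module R E] (φ : M →ₗ[R] E) : Prop :=
  Function.Injective φ ∧ IsSPureSubmodule S (LinearMap.range φ)

/-- `M` is an `S`-pure essential extension of its submodule `N`. -/
def IsSPureEssentialExtension (S : Set (ModuleCat.{u} R)) {M : Type u} [AddCommGroup M]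
    [Module R M] (N : Submodule R M) : Prop :=
  IsSPureSubmodule S N ∧
    ∀ ⦃L : Type u⦄ [AddCommGroup L] [Module R L] (φ : M →ₗ[R] L),
      IsSPureMono S (φ ∘ₗ N.subtype) → Function.Injective φ

/-- `M` is a maximal `S`-pure essential extension of its submodule `N` : `M` is an
`S`-pure essential extension of `N` and no proper extension of `M` is an `S`-pure essential
extension of (the image of) `N`. -/
def IsMaxSPureEssentialExtension (S : Set (ModuleCat.{u} R)) {M : Type u} [AddCommGroup M]
    [Module R M] (N : Submodule R M) : Prop :=
  IsSPureEssentialExtension S N ∧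
    ∀ ⦃L : Type u⦄ [AddCommGroup L] [Module R L] (ι : M →ₗ[R] L), Function.Injective ι →
      IsSPureEssentialExtension S (LinearMap.range (ι ∘ₗ N.subtype)) → Function.Surjective ι

end Defs

section Aux
variable [Ring R] {S : Set (ModuleCat.{u} R)}
variable {P Q Q' : Type u} [AddCommGroup P] [Module R P] [AddCommGroup Q] [Module R Q]
  [AddCommGroup Q'] [Module R Q']

/-- If a composite has the `S`-pure lifting property, so does the outer map. -/
lemma aux_outer {θ : Q →ₗ[R] Q'} {π : P →ₗ[R] Q} (hl : SPureLift S (θ ∘ₗ π)) :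
    SPureLift S θ := by
  intro U hU u
  obtain ⟨v, hv⟩ := hl U hU u
  exact ⟨π ∘ₗ v, by rw [← LinearMap.comp_assoc, hv]⟩

/-- Factor a map through a surjection containing its kernel. -/
lemma aux_factor (π : P →ₗ[R] Q) (hπ : Surjective π) (π' : P →ₗ[R] Q')
    (hk : ker π ≤ ker π') : ∃ δ : Q →ₗ[R] Q', δ ∘ₗ π = π' := by
  refine ⟨(ker π).liftQ π' hk ∘ₗ (π.quotKerEquivOfSurjective hπ).symm.toLinearMap, ?_⟩
  ext p
  have h1 : (π.quotKerEquivOfSurjective hπ).symm (π p) = Submodule.Quotient.mk p := by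
    rw [LinearEquiv.symm_apply_eq]
    simp [LinearMap.quotKerEquivOfSurjective, LinearMap.quotKerEquivRange]
  simp [h1]

/-- The `S`-pure lifting property transfers between surjections with the same kernel. -/
lemma aux_transfer {π : P →ₗ[R] Q} {π' : P →ₗ[R] Q'} (hπ : Surjective π) (hπ' : Surjective π')
    (hker : ker π = ker π') (hl : SPureLift S π) : SPureLift S π' := by
  obtain ⟨δ, hδ⟩ := aux_factor π' hπ' π hker.ge
  have hδi : Injective δ := by
    rw [injective_iff_map_eq_zero]
    intro q hq
    obtain ⟨p, rfl⟩ := hπ' q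
    have h1 : π p = 0 := by rw [← LinearMap.congr_fun hδ p]; exact hq
    have : p ∈ ker π' := hker ▸ h1
    exact this
  intro U hU u
  obtain ⟨v, hv⟩ := hl U hU (δ ∘ₗ u)
  refine ⟨v, LinearMap.ext fun x => hδi ?_⟩
  have h2 := LinearMap.congr_fun hv x
  simpa using LinearMap.congr_fun hδ (v x) |>.trans h2

/-- `S`-purity reflects along injective maps. -/
lemma aux_reflect {ψ : P →ₗ[R] Q} (hψ : Injective ψ) {N : Submodule R P}
    (h : IsSPureSubmodule S (N.map ψ)) : IsSPureSubmodule S N := by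
  have hle : N ≤ (N.map ψ).comap ψ := Submodule.le_comap_map ψ N
  set ψq := Submodule.mapQ N (N.map ψ) ψ hle with hψqdef
  have hcomm : ∀ p : P, ψq (N.mkQ p) = (N.map ψ).mkQ (ψ p) := fun p => by
    simp [ψq, Submodule.mapQ_apply]
  have hψqi : Injective ψq := by
    rw [injective_iff_map_eq_zero]
    intro a ha
    obtain ⟨p, rfl⟩ := N.mkQ_surjective a
    rw [hcomm] at ha
    rw [Submodule.mkQ_apply, Submodule.Quotient.mk_eq_zero] at ha
    obtain ⟨n, hn, hne⟩ := ha
    have : p ∈ N := by rwa [← hψ hne]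
    simp [Submodule.mkQ_apply, Submodule.Quotient.mk_eq_zero, this]
  intro U hU u
  obtain ⟨v, hv⟩ := h U hU (ψq ∘ₗ u)
  have hmem : ∀ x, v x ∈ range ψ := by
    intro x
    obtain ⟨m, hm⟩ := N.mkQ_surjective (u x)
    have h1 := LinearMap.congr_fun hv x
    rw [LinearMap.comp_apply, LinearMap.comp_apply, ← hm, hcomm] at h1
    rw [Submodule.mkQ_apply, Submodule.mkQ_apply, Submodule.Quotient.eq] at h1
    obtain ⟨n, hn, hne⟩ := h1
    exact ⟨n + m, by rw [map_add, hne]; abel⟩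
  let w : U →ₗ[R] P := (LinearEquiv.ofInjective ψ hψ).symm.toLinearMap ∘ₗ
      LinearMap.codRestrict (range ψ) v hmem
  have hw : ∀ x, ψ (w x) = v x := by
    intro x
    show ψ ((LinearEquiv.ofInjective ψ hψ).symm ⟨v x, hmem x⟩) = v x
    exact LinearEquiv.ofInjective_symm_apply (f := ψ) (h := hψ) ⟨v x, hmem x⟩
  refine ⟨w, LinearMap.ext fun x => hψqi ?_⟩
  rw [LinearMap.comp_apply, hcomm, hw]
  obtain ⟨m, hm⟩ := N.mkQ_surjective (u x)
  have h1 := LinearMap.congr_fun hv x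
  simpa using h1

/-- The kernel of the double projection. -/
lemma aux_ker_sup {E : Type u} [AddCommGroup E] [Module R E] (i : E →ₗ[R] P)
    (X : Submodule R P) :
    ker ((range (X.mkQ ∘ₗ i)).mkQ ∘ₗ X.mkQ) = X ⊔ range i := by
  ext p
  constructor
  · intro hp
    have h1 : X.mkQ p ∈ range (X.mkQ ∘ₗ i) := by
      have := hp
      rw [LinearMap.mem_ker, LinearMap.comp_apply, Submodule.mkQ_apply,
        Submodule.Quotient.mk_eq_zero] at this
      exact this
    obtain ⟨e, he⟩ := h1
    have h2 : p - i e ∈ X := by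
      rw [LinearMap.comp_apply] at he
      rw [← Submodule.Quotient.eq]
      rw [Submodule.mkQ_apply, Submodule.mkQ_apply] at he
      exact he.symm
    exact Submodule.mem_sup.mpr ⟨p - i e, h2, i e, ⟨e, rfl⟩, by abel⟩
  · intro hp
    obtain ⟨x, hx, y, ⟨e, rfl⟩, rfl⟩ := Submodule.mem_sup.mp hp
    rw [LinearMap.mem_ker, LinearMap.comp_apply, Submodule.mkQ_apply,
      Submodule.Quotient.mk_eq_zero]
    refine ⟨e, ?_⟩
    rw [LinearMap.comp_apply, Submodule.mkQ_apply, Submodule.mkQ_apply,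
      Submodule.Quotient.eq]
    simpa using hx

/-- Purity passes to directed suprema (using finite presentability). -/
lemma aux_chain {E : Type u} [AddCommGroup E] [Module R E]
    (hfp : ∀ U ∈ S, Module.FinitePresentation R U)
    (i : E →ₗ[R] P) {c : Set (Submodule R P)} (hc : IsChain (· ≤ ·) c) (hne : c.Nonempty)
    (hmem : ∀ Y ∈ c, IsSPureSubmodule S (range (Y.mkQ ∘ₗ i))) :
    IsSPureSubmodule S (range ((sSup c).mkQ ∘ₗ i)) := by
  set X := sSup c with hX
  set NX := range (X.mkQ ∘ₗ i) with hNX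
  set πX : P →ₗ[R] (P ⧸ X) ⧸ NX := NX.mkQ ∘ₗ X.mkQ with hπX
  have hπXs : Surjective πX := (Submodule.mkQ_surjective _).comp (Submodule.mkQ_surjective _)
  have hkerX : ker πX = X ⊔ range i := aux_ker_sup i X
  intro U hU u
  haveI := hfp U hU
  obtain ⟨n, ρ, hρ⟩ := Module.Finite.exists_fin' R U
  have hKfg : (ker ρ).FG := Module.FinitePresentation.fg_ker ρ hρ
  let b := Pi.basisFun R (Fin n)
  choose pre hpre using hπXs
  let ψ : (Fin n → R) →ₗ[R] P := Module.Basis.constr b ℕ fun k => pre (u (ρ (b k)))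
  have hψ : πX ∘ₗ ψ = u ∘ₗ ρ := b.ext fun k => by
    simp [ψ, Module.Basis.constr_basis, hpre]
  have hψK : (ker ρ).map ψ ≤ X ⊔ range i := by
    rintro _ ⟨y, hy, rfl⟩
    rw [← hkerX, LinearMap.mem_ker]
    have hy0 : ρ y = 0 := hy
    have h1 := LinearMap.congr_fun hψ y
    simp only [LinearMap.comp_apply, hy0, map_zero] at h1
    exact h1
  -- find a single stage
  have hdir : DirectedOn (· ≤ ·) ((fun Y => Y ⊔ range i) '' c) := by
    rintro _ ⟨Y1, h1, rfl⟩ _ ⟨Y2, h2, rfl⟩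
    rcases hc.total h1 h2 with hle | hle
    · exact ⟨Y2 ⊔ range i, ⟨Y2, h2, rfl⟩, sup_le_sup_right hle _, le_rfl⟩
    · exact ⟨Y1 ⊔ range i, ⟨Y1, h1, rfl⟩, le_rfl, sup_le_sup_right hle _⟩
  have hsup : sSup ((fun Y => Y ⊔ range i) '' c) = X ⊔ range i := by
    apply le_antisymm
    · apply sSup_le
      rintro _ ⟨Y, hY, rfl⟩
      exact sup_le_sup_right (le_sSup hY) _
    · obtain ⟨Y0, hY0⟩ := hne
      apply sup_le
      · apply sSup_le
        intro Y hY
        exact le_trans le_sup_left (le_sSup ⟨Y, hY, rfl⟩)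
      · exact le_trans le_sup_right (le_sSup ⟨Y0, hY0, rfl⟩)
  have hcompact := (Submodule.fg_iff_compact _).mp (hKfg.map ψ)
  rw [CompleteLattice.isCompactElement_iff_le_of_directed_sSup_le] at hcompact
  obtain ⟨_, ⟨Y, hY, rfl⟩, hle⟩ :=
    hcompact _ (hne.image _) hdir (le_of_le_of_eq hψK hsup.symm)
  -- stage data
  set NY := range (Y.mkQ ∘ₗ i) with hNY
  set πY : P →ₗ[R] (P ⧸ Y) ⧸ NY := NY.mkQ ∘ₗ Y.mkQ with hπY
  have hπYs : Surjective πY := (Submodule.mkQ_surjective _).comp (Submodule.mkQ_surjective _)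
  have hkerY : ker πY = Y ⊔ range i := aux_ker_sup i Y
  obtain ⟨ustar, hustar⟩ := aux_factor ρ hρ (πY ∘ₗ ψ) (by
    intro y hy
    have h2 : ψ y ∈ ker πY := by
      rw [hkerY]
      exact hle ⟨y, hy, rfl⟩
    simpa using h2)
  obtain ⟨v, hv⟩ := hmem Y hY U hU ustar
  have hYX : Y ≤ X := le_sSup hY
  let μ : (P ⧸ Y) →ₗ[R] P ⧸ X := Y.liftQ X.mkQ (by rw [Submodule.ker_mkQ]; exact hYX)
  obtain ⟨δ, hδ⟩ := aux_factor πY hπYs πX (by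
    rw [hkerY, hkerX]; exact sup_le_sup_right hYX _)
  refine ⟨μ ∘ₗ v, ?_⟩
  have key1 : NX.mkQ ∘ₗ μ = δ ∘ₗ NY.mkQ := by
    apply LinearMap.ext; intro z
    obtain ⟨p, rfl⟩ := Y.mkQ_surjective z
    have e1 : μ (Y.mkQ p) = X.mkQ p := by
      simp [μ, Submodule.liftQ_apply]
    have e2 := LinearMap.congr_fun hδ p
    simp only [LinearMap.comp_apply] at e2 ⊢
    rw [e1]
    rw [hπY] at e2
    simp only [LinearMap.comp_apply] at e2
    rw [e2]
    rfl
  have key2 : δ ∘ₗ ustar = u := by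
    apply LinearMap.ext; intro x'
    obtain ⟨y, rfl⟩ := hρ x'
    have e1 := LinearMap.congr_fun hustar y
    have e2 := LinearMap.congr_fun hδ (ψ y)
    have e3 := LinearMap.congr_fun hψ y
    simp only [LinearMap.comp_apply] at e1 e2 e3 ⊢
    rw [e1, e2, e3]
  apply LinearMap.ext; intro x
  have e4 := LinearMap.congr_fun key1 (v x)
  have e5 := LinearMap.congr_fun hv x
  have e6 := LinearMap.congr_fun key2 x
  simp only [LinearMap.comp_apply] at e4 e5 e6 ⊢
  rw [e4, e5, e6]

end Aux

/-- `E` is `S`-pure injective iff `E` has no proper `S`-pure essential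
extension. -/
theorem stmt14 [Ring R] (S : Set (ModuleCat.{u} R))
    (hR : ModuleCat.of R R ∈ S) (hfp : ∀ U ∈ S, Module.FinitePresentation R U)
    (E : Type u) [AddCommGroup E] [Module R E] :
    IsSPureInjective S E ↔
      ∀ (L : Type u) [AddCommGroup L] [Module R L] (ι : E →ₗ[R] L),
        Function.Injective ι → IsSPureEssentialExtension S (LinearMap.range ι) →
        Function.Surjective ι := by
  constructor
  · -- `S`-pure injective implies no proper `S`-pure essential extension
    intro hinj L _ _ ι hι hess
    obtain ⟨π, hπ⟩ := hinj ι (range ι).mkQ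
      ⟨hι, Submodule.mkQ_surjective _, by
        rw [LinearMap.exact_iff, Submodule.ker_mkQ], hess.1⟩ LinearMap.id
    have hid : ∀ e, π (ι e) = e := fun e => by simpa using LinearMap.congr_fun hπ e
    have hπinj : Injective π := by
      apply hess.2 π
      constructor
      · rw [injective_iff_map_eq_zero]
        intro x hx0
        obtain ⟨e, he⟩ := x.2
        have h1 : π (ι e) = 0 := by rw [he]; exact hx0
        have h2 : e = 0 := (hid e).symm.trans h1
        apply Subtype.ext
        show (x : L) = 0
        rw [← he, h2, map_zero]
      · have hrt : range (π ∘ₗ (range ι).subtype) = ⊤ := by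
          rw [eq_top_iff]
          rintro e -
          exact ⟨⟨ι e, LinearMap.mem_range_self ι e⟩, hid e⟩
        rw [hrt]
        intro U hU u
        refine ⟨0, LinearMap.ext fun x => ?_⟩
        have h3 : u x = 0 := by
          obtain ⟨e, he⟩ := Submodule.mkQ_surjective _ (u x)
          rw [← he, Submodule.mkQ_apply, Submodule.Quotient.mk_eq_zero]
          exact Submodule.mem_top
        simp [h3]
    intro x
    refine ⟨π x, hπinj ?_⟩
    rw [hid (π x)]
  · -- no proper `S`-pure essential extension implies `S`-pure injective
    intro hnoess A B C _ _ _ _ _ _ f g hex h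
    obtain ⟨hfinj, hgsurj, hexact, hpure⟩ := hex
    set W : Submodule R (E × B) := range (h.prod (-f)) with hW
    set i : E →ₗ[R] (E × B) ⧸ W := W.mkQ ∘ₗ LinearMap.inl R E B with hidef
    set j : B →ₗ[R] (E × B) ⧸ W := W.mkQ ∘ₗ LinearMap.inr R E B with hjdef
    have hgf0 : ∀ a, g (f a) = 0 := fun a => (hexact (f a)).mpr ⟨a, rfl⟩
    have hiinj : Injective i := by
      rw [injective_iff_map_eq_zero]
      intro e he
      have h1 : ((e, 0) : E × B) ∈ W := by
        rw [← Submodule.Quotient.mk_eq_zero]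
        exact he
      obtain ⟨a, ha⟩ := h1
      have ha' : (h a, -(f a)) = ((e, 0) : E × B) := by simpa using ha
      rw [Prod.mk.injEq] at ha'
      have ha0 : a = 0 := hfinj (by rw [map_zero, ← neg_eq_zero]; exact ha'.2)
      rw [← ha'.1, ha0, map_zero]
    have hji : ∀ a, j (f a) = i (h a) := by
      intro a
      show W.mkQ (0, f a) = W.mkQ (h a, 0)
      rw [Submodule.mkQ_apply, Submodule.mkQ_apply, Submodule.Quotient.eq]
      exact ⟨-a, by simp [Prod.ext_iff]⟩
    have hrangei : IsSPureSubmodule S (range i) := by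
      have hkg : ker g ≤ ker ((range i).mkQ ∘ₗ j) := by
        intro bb hb
        obtain ⟨a, rfl⟩ := (hexact bb).mp hb
        rw [LinearMap.mem_ker, LinearMap.comp_apply, hji a, Submodule.mkQ_apply,
          Submodule.Quotient.mk_eq_zero]
        exact LinearMap.mem_range_self i (h a)
      obtain ⟨gbar, hgbar⟩ := aux_factor g hgsurj ((range i).mkQ ∘ₗ j) hkg
      have hgbi : Injective gbar := by
        rw [injective_iff_map_eq_zero]
        intro cc hcc
        obtain ⟨bb, rfl⟩ := hgsurj cc
        have h1 : (range i).mkQ (j bb) = 0 := by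
          have := LinearMap.congr_fun hgbar bb
          simp only [LinearMap.comp_apply] at this
          rw [← this]; exact hcc
        rw [Submodule.mkQ_apply, Submodule.Quotient.mk_eq_zero] at h1
        obtain ⟨e, he⟩ := h1
        have he2 : ((e, 0) : E × B) - (0, bb) ∈ W := by
          rw [← Submodule.Quotient.eq]
          exact he
        obtain ⟨a, ha⟩ := he2
        have ha' : h a = e ∧ -(f a) = -bb := by
          have h9 := ha
          rw [Prod.ext_iff] at h9
          simpa using h9
        have hbb : bb = f a := (neg_inj.mp ha'.2).symm
        rw [hbb]
        exact hgf0 a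
      have hgbs : Surjective gbar := by
        intro q
        obtain ⟨p, rfl⟩ := Submodule.mkQ_surjective _ q
        obtain ⟨eb, rfl⟩ := Submodule.mkQ_surjective W p
        refine ⟨g eb.2, ?_⟩
        have h1 := LinearMap.congr_fun hgbar eb.2
        simp only [LinearMap.comp_apply] at h1
        rw [h1]
        have h2 : W.mkQ eb = i eb.1 + j eb.2 := by
          show W.mkQ eb = W.mkQ (eb.1, 0) + W.mkQ (0, eb.2)
          rw [← map_add]
          congr 1
          ext <;> simp
        rw [h2, map_add]
        have h3 : (range i).mkQ (i eb.1) = 0 := by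
          rw [Submodule.mkQ_apply, Submodule.Quotient.mk_eq_zero]
          exact LinearMap.mem_range_self i eb.1
        rw [h3, zero_add]
      let ge := LinearEquiv.ofBijective gbar ⟨hgbi, hgbs⟩
      intro U hU u
      obtain ⟨v, hv⟩ := hpure U hU (ge.symm.toLinearMap ∘ₗ u)
      refine ⟨j ∘ₗ v, LinearMap.ext fun x => ?_⟩
      have h1 := LinearMap.congr_fun hgbar (v x)
      have h2 := LinearMap.congr_fun hv x
      simp only [LinearMap.comp_apply] at h1 h2 ⊢
      rw [← h1, h2]
      exact ge.apply_symm_apply (u x)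
    -- Zorn's lemma
    set 𝒳 : Set (Submodule R ((E × B) ⧸ W)) :=
      {X | Injective (X.mkQ ∘ₗ i) ∧ IsSPureSubmodule S (range (X.mkQ ∘ₗ i))} with h𝒳
    have hbot : ⊥ ∈ 𝒳 := by
      constructor
      · rw [injective_iff_map_eq_zero]
        intro e he
        have h1 : i e ∈ (⊥ : Submodule R ((E × B) ⧸ W)) := by
          rw [← Submodule.Quotient.mk_eq_zero]
          exact he
        exact (injective_iff_map_eq_zero i).mp hiinj e h1
      · have hk1 := aux_ker_sup i (⊥ : Submodule R ((E × B) ⧸ W))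
        have hsl : SPureLift S
            ((range ((⊥ : Submodule R ((E × B) ⧸ W)).mkQ ∘ₗ i)).mkQ ∘ₗ
              (⊥ : Submodule R ((E × B) ⧸ W)).mkQ) :=
          aux_transfer (π := (range i).mkQ)
            (π' := (range ((⊥ : Submodule R ((E × B) ⧸ W)).mkQ ∘ₗ i)).mkQ ∘ₗ
              (⊥ : Submodule R ((E × B) ⧸ W)).mkQ)
            (Submodule.mkQ_surjective _)
            ((Submodule.mkQ_surjective _).comp (Submodule.mkQ_surjective _))
            (by rw [Submodule.ker_mkQ, hk1, bot_sup_eq]) hrangei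
        exact aux_outer hsl
    obtain ⟨X, -, hXmax⟩ := zorn_le_nonempty₀ 𝒳 (fun c hc hchain y hy =>
      ⟨sSup c, ⟨by
        rw [injective_iff_map_eq_zero]
        intro e he
        have h1 : i e ∈ sSup c := by
          rw [← Submodule.Quotient.mk_eq_zero]
          exact he
        obtain ⟨Y, hY, h2⟩ := (Submodule.mem_sSup_of_directed ⟨y, hy⟩ hchain.directedOn).mp h1
        have h3 : (Y.mkQ ∘ₗ i) e = 0 := by
          rw [LinearMap.comp_apply, Submodule.mkQ_apply, Submodule.Quotient.mk_eq_zero]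
          exact h2
        exact (injective_iff_map_eq_zero _).mp (hc hY).1 e h3,
        aux_chain hfp i hchain ⟨y, hy⟩ (fun Y hY => (hc hY).2)⟩,
        fun z hz => le_sSup hz⟩) ⊥ hbot
    have hXmem : X ∈ 𝒳 := hXmax.1
    set cX := X.mkQ ∘ₗ i with hcX
    have hess : IsSPureEssentialExtension S (range cX) := by
      refine ⟨hXmem.2, ?_⟩
      intro L _ _ φ hmono
      set X' := Submodule.comap X.mkQ (ker φ) with hX'
      have hXX' : X ≤ X' := by
        intro p hp
        rw [hX', Submodule.mem_comap, LinearMap.mem_ker]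
        have h0 : X.mkQ p = 0 := by
          rw [Submodule.mkQ_apply, Submodule.Quotient.mk_eq_zero]; exact hp
        rw [h0, map_zero]
      have hker1 : X' ≤ ker (φ ∘ₗ X.mkQ) := by
        rw [LinearMap.ker_comp]
      have hφ'inj : Injective (X'.liftQ (φ ∘ₗ X.mkQ) hker1) := by
        rw [← LinearMap.ker_eq_bot]
        apply Submodule.ker_liftQ_eq_bot
        rw [LinearMap.ker_comp]
      have hcX'eq : (X'.liftQ (φ ∘ₗ X.mkQ) hker1) ∘ₗ (X'.mkQ ∘ₗ i) = φ ∘ₗ cX := by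
        apply LinearMap.ext; intro e
        simp [Submodule.liftQ_apply, hcX]
      have hpureX' : IsSPureSubmodule S (range (X'.mkQ ∘ₗ i)) := by
        apply aux_reflect hφ'inj
        have hmap : (range (X'.mkQ ∘ₗ i)).map (X'.liftQ (φ ∘ₗ X.mkQ) hker1)
            = range (φ ∘ₗ (range cX).subtype) := by
          rw [← LinearMap.range_comp, hcX'eq,
            LinearMap.range_comp (range cX).subtype φ, Submodule.range_subtype,
            LinearMap.range_comp cX φ]
        rw [hmap]
        exact hmono.2
      have hinjX' : Injective (X'.mkQ ∘ₗ i) := by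
        rw [injective_iff_map_eq_zero]
        intro e he
        have h1 : i e ∈ X' := by
          rw [← Submodule.Quotient.mk_eq_zero]
          exact he
        rw [hX', Submodule.mem_comap, LinearMap.mem_ker] at h1
        have h3 : cX e ∈ range cX := LinearMap.mem_range_self cX e
        have h4 : (φ ∘ₗ (range cX).subtype) ⟨cX e, h3⟩ = 0 := h1
        have h5 := (injective_iff_map_eq_zero _).mp hmono.1 _ h4
        have h6 : cX e = 0 := by
          have := congrArg Subtype.val h5
          simpa using this
        exact (injective_iff_map_eq_zero _).mp hXmem.1 e h6
      have hX'X : X' ≤ X := hXmax.2 ⟨hinjX', hpureX'⟩ hXX'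
      have hX'eq : X' = X := le_antisymm hX'X hXX'
      rw [← LinearMap.ker_eq_bot]
      have h7 : ker φ = Submodule.map X.mkQ X' := by
        rw [hX', Submodule.map_comap_eq_of_surjective (Submodule.mkQ_surjective X)]
      rw [h7, hX'eq, eq_bot_iff]
      rintro _ ⟨p, hp, rfl⟩
      simp only [Submodule.mem_bot, Submodule.mkQ_apply, Submodule.Quotient.mk_eq_zero]
      exact hp
    have hsurj : Surjective cX := hnoess _ cX hXmem.1 hess
    let ce := LinearEquiv.ofBijective cX ⟨hXmem.1, hsurj⟩
    refine ⟨ce.symm.toLinearMap ∘ₗ (X.mkQ ∘ₗ j), ?_⟩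
    apply LinearMap.ext; intro a
    simp only [LinearMap.comp_apply, LinearEquiv.coe_coe]
    rw [hji a]
    show ce.symm (ce (h a)) = h a
    exact ce.symm_apply_apply (h a)
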